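/- Adaptive Hoeffding inequality: Let X_1, X_2, ... be an i.i.d. (or independent) sequence of random variables with 0 ≤ X_i ≤ 1 almost surely, S_n = Σ_{i=1}^n (X_i − E X_i), and ε_n = √((2 ln(log₂(n) + 1) + ln(4/δ)) / n) for δ ∈ (0,1). Then P(∃ n ≥ 1 : S_n / n ≥ ε_n) ≤ δ/2. -/

import Mathlib

open MeasureTheory ProbabilityTheory Real


/-- Key analytic inequality for Hoeffding's lemma. -/
lemma ahi_key (m : ℝ) (hm0 : 0 ≤ m) (hm1 : m ≤ 1) (t : ℝ) :
    1 - m + m * exp t ≤ exp (t ^ 2 / 8 + t * m) := by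
  have hG : ∀ s : ℝ, 0 < 1 - m + m * exp s := by
    intro s
    rcases eq_or_lt_of_le hm0 with h | h
    · simp [← h]
    · nlinarith [exp_pos s, mul_pos h (exp_pos s)]
  set G : ℝ → ℝ := fun s => 1 - m + m * exp s with hGdef
  set F : ℝ → ℝ := fun s => s ^ 2 / 8 + s * m - Real.log (G s) with hFdef
  set F' : ℝ → ℝ := fun s => s / 4 + m - m * exp s / G s with hF'def
  have hdF : ∀ s, HasDerivAt F (F' s) s := by
    intro s
    have hG' : HasDerivAt G (m * exp s) s := by
      exact (((Real.hasDerivAt_exp s).const_mul m).const_add (1 - m))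
    have hlog : HasDerivAt (fun u => Real.log (G u)) (m * exp s / G s) s :=
      hG'.log (hG s).ne'
    have h1 : HasDerivAt (fun u : ℝ => u ^ 2 / 8 + u * m) (s / 4 + m) s := by
      have := ((hasDerivAt_pow 2 s).div_const 8).add (hasDerivAt_mul_const m)
      · refine this.congr_deriv ?_
        norm_num
        ring
    exact h1.sub hlog
  have hdF' : ∀ s, HasDerivAt F' (1 / 4 - m * exp s * (1 - m) / (G s) ^ 2) s := by
    intro s
    have hG' : HasDerivAt G (m * exp s) s := by
      exact (((Real.hasDerivAt_exp s).const_mul m).const_add (1 - m))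
    have hnum : HasDerivAt (fun u => m * exp u) (m * exp s) s :=
      (Real.hasDerivAt_exp s).const_mul m
    have hdiv : HasDerivAt (fun u => m * exp u / G u)
        ((m * exp s * G s - m * exp s * (m * exp s)) / (G s) ^ 2) s :=
      hnum.div hG' (hG s).ne'
    have h1 : HasDerivAt (fun u : ℝ => u / 4 + m) (1 / 4) s := by
      simpa using ((hasDerivAt_id s).div_const 4).add_const m
    have := h1.sub hdiv
    refine this.congr_deriv ?_
    have : G s = 1 - m + m * exp s := rfl
    field_simp
    ring
  have hF'' : ∀ s, 0 ≤ 1 / 4 - m * exp s * (1 - m) / (G s) ^ 2 := by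
    intro s
    rw [sub_nonneg, div_le_iff₀ (pow_pos (hG s) 2)]
    have h : G s = 1 - m + m * exp s := rfl
    nlinarith [sq_nonneg (1 - m - m * exp s), exp_pos s]
  have hmonoF' : Monotone F' :=
    monotone_of_deriv_nonneg (fun s => (hdF' s).differentiableAt)
      (fun s => by rw [(hdF' s).deriv]; exact hF'' s)
  have hF'0 : F' 0 = 0 := by
    simp [hF'def, hGdef]
  have hF0 : F 0 = 0 := by
    simp [hFdef, hGdef]
  have hFnonneg : ∀ s, 0 ≤ F s := by
    intro s
    rcases le_total 0 s with h | h
    · have hmono : MonotoneOn F (Set.Ici 0) := by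
        refine monotoneOn_of_deriv_nonneg (convex_Ici 0)
          (fun u _ => (hdF u).differentiableAt.continuousAt.continuousWithinAt)
          (fun u _ => (hdF u).differentiableAt.differentiableWithinAt) (fun u hu => ?_)
        rw [(hdF u).deriv]
        rw [interior_Ici] at hu
        have := hmonoF' (le_of_lt hu)
        rwa [hF'0] at this
      have := hmono (Set.self_mem_Ici) h h
      rwa [hF0] at this
    · have hanti : AntitoneOn F (Set.Iic 0) := by
        refine antitoneOn_of_deriv_nonpos (convex_Iic 0)
          (fun u _ => (hdF u).differentiableAt.continuousAt.continuousWithinAt)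
          (fun u _ => (hdF u).differentiableAt.differentiableWithinAt) (fun u hu => ?_)
        rw [(hdF u).deriv]
        rw [interior_Iic] at hu
        have := hmonoF' (le_of_lt hu)
        rwa [hF'0] at this
      have := hanti h (Set.self_mem_Iic) h
      rwa [hF0] at this
  have h : 0 ≤ t ^ 2 / 8 + t * m - Real.log (G t) := hFnonneg t
  have hlogle : Real.log (G t) ≤ t ^ 2 / 8 + t * m := by linarith
  calc G t = exp (Real.log (G t)) := (Real.exp_log (hG t)).symm
    _ ≤ exp (t ^ 2 / 8 + t * m) := exp_le_exp.2 hlogle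

/-- Hoeffding's lemma for `[0,1]`-valued random variables. -/
lemma ahi_mgf {Ω : Type*} [MeasurableSpace Ω] {μ : Measure Ω} [IsProbabilityMeasure μ]
    {X : Ω → ℝ} (hX : Measurable X) (hb : ∀ᵐ ω ∂μ, X ω ∈ Set.Icc (0 : ℝ) 1) (t : ℝ) :
    ∫ ω, exp (t * (X ω - ∫ x, X x ∂μ)) ∂μ ≤ exp (t ^ 2 / 8) := by
  have hXint : Integrable X μ := by
    refine (integrable_const (1 : ℝ)).mono' hX.aestronglyMeasurable ?_
    filter_upwards [hb] with ω hω
    rw [Real.norm_eq_abs, abs_le]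
    exact ⟨by linarith [hω.1], hω.2⟩
  set m : ℝ := ∫ x, X x ∂μ with hmdef
  have hm0 : 0 ≤ m := integral_nonneg_of_ae (by filter_upwards [hb] with ω hω using hω.1)
  have hm1 : m ≤ 1 := by
    have := integral_mono_ae hXint (integrable_const (1 : ℝ))
      (by filter_upwards [hb] with ω hω using hω.2)
    simpa using this
  have hpt : ∀ x : ℝ, x ∈ Set.Icc (0 : ℝ) 1 → exp (t * x) ≤ 1 - x + x * exp t := by
    intro x hx
    have h := convexOn_exp.2 (Set.mem_univ (0 : ℝ)) (Set.mem_univ t)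
      (by linarith [hx.2] : 0 ≤ 1 - x) hx.1 (by ring)
    simpa [mul_comm, smul_eq_mul] using h
  have hexp_int : Integrable (fun ω => exp (t * X ω)) μ := by
    refine (integrable_const (exp |t|)).mono'
      ((hX.const_mul t).exp).aestronglyMeasurable ?_
    filter_upwards [hb] with ω hω
    rw [Real.norm_eq_abs, abs_of_pos (exp_pos _)]
    apply exp_le_exp.2
    calc t * X ω ≤ |t * X ω| := le_abs_self _
      _ = |t| * |X ω| := abs_mul _ _
      _ ≤ |t| * 1 := by
          refine mul_le_mul_of_nonneg_left ?_ (abs_nonneg t)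
          rw [abs_le]; exact ⟨by linarith [hω.1], hω.2⟩
      _ = |t| := mul_one _
  have hintle : ∫ ω, exp (t * X ω) ∂μ ≤ 1 - m + m * exp t := by
    have h2 : Integrable (fun ω => 1 - X ω + X ω * exp t) μ :=
      ((integrable_const (1:ℝ)).sub hXint).add (hXint.mul_const _)
    have := integral_mono_ae hexp_int h2
      (by filter_upwards [hb] with ω hω using hpt (X ω) hω)
    have h3 : Integrable (fun ω => 1 - X ω) μ := (integrable_const (1:ℝ)).sub hXint
    have h4 : Integrable (fun ω => X ω * exp t) μ := hXint.mul_const _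
    calc ∫ ω, exp (t * X ω) ∂μ ≤ ∫ ω, (1 - X ω + X ω * exp t) ∂μ := this
      _ = 1 - m + m * exp t := by
          rw [integral_add h3 h4, integral_sub (integrable_const (1:ℝ)) hXint,
            integral_mul_const]
          simp [hmdef]
  have key : 1 - m + m * exp t ≤ exp (t ^ 2 / 8 + t * m) := ahi_key m hm0 hm1 t
  calc ∫ ω, exp (t * (X ω - m)) ∂μ
      = ∫ ω, exp (t * X ω) / exp (t * m) ∂μ := by
        congr 1; funext ω; rw [mul_sub, Real.exp_sub]
    _ = (∫ ω, exp (t * X ω) ∂μ) / exp (t * m) := integral_div _ _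
    _ ≤ (1 - m + m * exp t) / exp (t * m) := by gcongr
    _ ≤ exp (t ^ 2 / 8 + t * m) / exp (t * m) := by gcongr
    _ = exp (t ^ 2 / 8) := by rw [← Real.exp_sub]; ring_nf

/-- Maximal Hoeffding inequality via Doob's maximal inequality. -/
lemma ahi_max {Ω : Type*} [MeasureSpace Ω] [IsProbabilityMeasure (ℙ : Measure Ω)]
    (X : ℕ → Ω → ℝ) (hmeas : ∀ i, Measurable (X i))
    (hindep : iIndepFun X ℙ)
    (hbound : ∀ i, ∀ᵐ ω, X i ω ∈ Set.Icc (0 : ℝ) 1)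
    (N : ℕ) (hN : 1 ≤ N) (a t : ℝ) (ht : 0 < t) :
    ℙ {ω | ∃ m : ℕ, 1 ≤ m ∧ m ≤ N ∧
        a ≤ ∑ i ∈ Finset.range m, (X i ω - ∫ ω', X i ω' ∂ℙ)}
      ≤ ENNReal.ofReal (exp (-(t * a) + N * (t ^ 2 / 8))) := by
  set Y : ℕ → Ω → ℝ := fun i ω => X i ω - ∫ ω', X i ω' ∂ℙ with hYdef
  have hXint : ∀ i, Integrable (X i) ℙ := by
    intro i
    refine (integrable_const (1 : ℝ)).mono' (hmeas i).aestronglyMeasurable ?_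
    filter_upwards [hbound i] with ω hω
    rw [Real.norm_eq_abs, abs_le]; exact ⟨by linarith [hω.1], hω.2⟩
  have hYmeas : ∀ i, Measurable (Y i) := fun i => (hmeas i).sub measurable_const
  have hYsm : ∀ i, StronglyMeasurable (Y i) := fun i => (hYmeas i).stronglyMeasurable
  have hYindep : iIndepFun Y ℙ := by
    have := hindep.comp (fun i => fun x : ℝ => x - ∫ ω', X i ω' ∂ℙ)
      (fun i => measurable_id.sub measurable_const)
    exact this
  have hYint : ∀ i, Integrable (Y i) ℙ := fun i => (hXint i).sub (integrable_const _)
  have hYmean : ∀ i, ∫ ω, Y i ω ∂ℙ = 0 := by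
    intro i
    rw [hYdef]
    simp only
    rw [integral_sub (hXint i) (integrable_const _), integral_const]
    simp
  have hYbdd : ∀ i, ∀ᵐ ω, |Y i ω| ≤ 1 := by
    intro i
    have hm0 : 0 ≤ ∫ ω', X i ω' ∂ℙ :=
      integral_nonneg_of_ae (by filter_upwards [hbound i] with ω hω using hω.1)
    have hm1 : (∫ ω', X i ω' ∂ℙ) ≤ 1 := by
      have := integral_mono_ae (hXint i) (integrable_const (1 : ℝ))
        (by filter_upwards [hbound i] with ω hω using hω.2)
      simpa using this
    filter_upwards [hbound i] with ω hω
    rw [hYdef]; simp only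
    rw [abs_le]
    constructor <;> nlinarith [hω.1, hω.2]
  set 𝒢 : Filtration ℕ _ := Filtration.natural Y hYsm with h𝒢def
  set f : ℕ → Ω → ℝ := fun n ω => exp (t * ∑ i ∈ Finset.range (n + 1), Y i ω) with hfdef
  have hYadp : StronglyAdapted 𝒢 Y := Filtration.stronglyAdapted_natural hYsm
  have hadp : StronglyAdapted 𝒢 f := by
    intro n
    show StronglyMeasurable[𝒢 n] (fun ω => exp (t * ∑ i ∈ Finset.range (n + 1), Y i ω))
    refine (Continuous.comp_stronglyMeasurable continuous_exp ?_)
    refine StronglyMeasurable.const_mul ?_ t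
    refine Finset.stronglyMeasurable_fun_sum _ (fun i hi => ?_)
    have : i ≤ n := Nat.lt_succ_iff.mp (Finset.mem_range.mp hi)
    exact (hYadp i).mono (𝒢.mono this)
  have hSbdd : ∀ n, ∀ᵐ ω, |∑ i ∈ Finset.range (n + 1), Y i ω| ≤ (n + 1 : ℝ) := by
    intro n
    have := ae_all_iff.2 hYbdd
    filter_upwards [this] with ω hω
    calc |∑ i ∈ Finset.range (n + 1), Y i ω| ≤ ∑ i ∈ Finset.range (n + 1), |Y i ω| :=
          Finset.abs_sum_le_sum_abs _ _
      _ ≤ ∑ _i ∈ Finset.range (n + 1), (1 : ℝ) := Finset.sum_le_sum (fun i _ => hω i)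
      _ = (n + 1 : ℝ) := by simp
  have hfint : ∀ n, Integrable (f n) ℙ := by
    intro n
    refine (integrable_const (exp (|t| * (n + 1)))).mono'
      ((hadp n).mono (𝒢.le n)).aestronglyMeasurable ?_
    filter_upwards [hSbdd n] with ω hω
    rw [Real.norm_eq_abs, abs_of_pos (exp_pos _)]
    apply exp_le_exp.2
    calc t * ∑ i ∈ Finset.range (n + 1), Y i ω
        ≤ |t * ∑ i ∈ Finset.range (n + 1), Y i ω| := le_abs_self _
      _ = |t| * |∑ i ∈ Finset.range (n + 1), Y i ω| := abs_mul _ _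
      _ ≤ |t| * (n + 1) := mul_le_mul_of_nonneg_left hω (abs_nonneg t)
  -- each exp(t * Y i) is integrable
  have hexpYint : ∀ i, Integrable (fun ω => exp (t * Y i ω)) ℙ := by
    intro i
    refine (integrable_const (exp |t|)).mono'
      (((hYmeas i).const_mul t).exp).aestronglyMeasurable ?_
    filter_upwards [hYbdd i] with ω hω
    rw [Real.norm_eq_abs, abs_of_pos (exp_pos _)]
    apply exp_le_exp.2
    calc t * Y i ω ≤ |t * Y i ω| := le_abs_self _
      _ = |t| * |Y i ω| := abs_mul _ _
      _ ≤ |t| * 1 := mul_le_mul_of_nonneg_left hω (abs_nonneg t)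
      _ = |t| := mul_one _
  -- submartingale property
  have hsub : Submartingale f 𝒢 ℙ := by
    refine submartingale_nat hadp hfint (fun n => ?_)
    have heq : f (n + 1) = f n * fun ω => exp (t * Y (n + 1) ω) := by
      funext ω
      simp only [hfdef, Pi.mul_apply]
      rw [Finset.sum_range_succ (f := fun i => Y i ω), mul_add, Real.exp_add]
    have hint2 : Integrable (f n * fun ω => exp (t * Y (n + 1) ω)) ℙ := by
      rw [← heq]; exact hfint (n + 1)
    have h1 : ℙ[f (n + 1)|𝒢 n] =ᵐ[ℙ] f n * ℙ[(fun ω => exp (t * Y (n + 1) ω))|𝒢 n] := by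
      rw [heq]
      exact condExp_mul_of_stronglyMeasurable_left (hadp n) hint2 (hexpYint (n + 1))
    have hindp : ProbabilityTheory.Indep
        (MeasurableSpace.comap (Y (n + 1)) inferInstance) (𝒢 n) ℙ :=
      hYindep.indep_comap_natural_of_lt hYsm (Nat.lt_succ_self n)
    have hYc : Measurable[MeasurableSpace.comap (Y (n + 1)) inferInstance] (Y (n + 1)) :=
      Measurable.of_comap_le le_rfl
    have hsm1 : StronglyMeasurable[MeasurableSpace.comap (Y (n + 1)) inferInstance]
        (fun ω => exp (t * Y (n + 1) ω)) :=
      ((hYc.const_mul t).exp).stronglyMeasurable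
    have h2 : ℙ[(fun ω => exp (t * Y (n + 1) ω))|𝒢 n]
        =ᵐ[ℙ] fun _ => ∫ ω, exp (t * Y (n + 1) ω) ∂ℙ :=
      condExp_indep_eq (hYmeas (n + 1)).comap_le (𝒢.le n) hsm1 hindp
    have h3 : (1 : ℝ) ≤ ∫ ω, exp (t * Y (n + 1) ω) ∂ℙ := by
      have hle : ∀ᵐ ω ∂ℙ, 1 + t * Y (n + 1) ω ≤ exp (t * Y (n + 1) ω) := by
        filter_upwards with ω using by linarith [Real.add_one_le_exp (t * Y (n + 1) ω)]
      have h4 : Integrable (fun ω => 1 + t * Y (n + 1) ω) ℙ :=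
        (integrable_const (1 : ℝ)).add ((hYint (n+1)).const_mul t)
      have := integral_mono_ae h4 (hexpYint (n + 1)) hle
      have heq2 : ∫ ω, (1 + t * Y (n + 1) ω) ∂ℙ = 1 := by
        rw [integral_add (integrable_const (1 : ℝ)) ((hYint (n+1)).const_mul t),
          integral_const, integral_const_mul, hYmean]
        simp
      linarith [this, heq2.ge]
    filter_upwards [h1, h2] with ω hω1 hω2
    rw [hω1, Pi.mul_apply, hω2]
    exact le_mul_of_one_le_right (exp_pos _).le h3
  have hnng : (0 : ℕ → Ω → ℝ) ≤ f := fun n ω => (exp_pos _).le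
  -- Doob's maximal inequality
  set ε : NNReal := ⟨exp (t * a), (exp_pos _).le⟩ with hεdef
  have hεcoe : (ε : ℝ) = exp (t * a) := rfl
  have hmax := maximal_ineq hsub hnng (ε := ε) (N - 1)
  have hNsub : N - 1 + 1 = N := Nat.succ_pred_eq_of_pos hN
  -- set inclusion
  have hincl : {ω | ∃ m : ℕ, 1 ≤ m ∧ m ≤ N ∧
        a ≤ ∑ i ∈ Finset.range m, (X i ω - ∫ ω', X i ω' ∂ℙ)} ⊆
      {ω | (ε : ℝ) ≤ (Finset.range (N - 1 + 1)).sup' Finset.nonempty_range_add_one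
        fun k => f k ω} := by
    rintro ω ⟨m, hm1, hmN, hma⟩
    have hk : m - 1 ∈ Finset.range (N - 1 + 1) := by
      rw [hNsub, Finset.mem_range]
      omega
    refine le_trans ?_ (Finset.le_sup' (fun k => f k ω) hk)
    rw [hεcoe, hfdef]
    simp only
    have hm : m - 1 + 1 = m := Nat.succ_pred_eq_of_pos hm1
    rw [hm]
    exact exp_le_exp.2 (mul_le_mul_of_nonneg_left hma ht.le)
  -- compute the integral bound
  have hmgf : ∫ ω, f (N - 1) ω ∂ℙ ≤ exp (N * (t ^ 2 / 8)) := by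
    have h1 : ∫ ω, f (N - 1) ω ∂ℙ = mgf (∑ i ∈ Finset.range N, Y i) ℙ t := by
      rw [mgf]
      congr 1
      funext ω
      rw [hfdef]
      simp only [Finset.sum_apply]
      rw [hNsub]
    rw [h1, hYindep.mgf_sum hYmeas]
    calc ∏ i ∈ Finset.range N, mgf (Y i) ℙ t
        ≤ ∏ _i ∈ Finset.range N, exp (t ^ 2 / 8) := by
          refine Finset.prod_le_prod (fun i _ => mgf_nonneg) (fun i _ => ?_)
          exact ahi_mgf (hmeas i) (hbound i) t
      _ = exp (t ^ 2 / 8) ^ N := by rw [Finset.prod_const, Finset.card_range]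
      _ = exp (N * (t ^ 2 / 8)) := by rw [← Real.exp_nat_mul]
  -- putting it together
  set B := {ω | (ε : ℝ) ≤ (Finset.range (N - 1 + 1)).sup' Finset.nonempty_range_add_one
    fun k => f k ω} with hBdef
  have hstep : (ε : ENNReal) * ℙ B ≤ ENNReal.ofReal (exp (N * (t ^ 2 / 8))) := by
    refine le_trans ?_ (ENNReal.ofReal_le_ofReal hmgf)
    refine le_trans hmax (ENNReal.ofReal_le_ofReal ?_)
    exact setIntegral_le_integral (hfint (N - 1))
      (by filter_upwards with ω using (exp_pos _).le)
  have hεpos : 0 < ε := by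
    rw [← NNReal.coe_pos, hεcoe]; exact exp_pos _
  have hε0 : (ε : ENNReal) ≠ 0 := ENNReal.coe_ne_zero.mpr hεpos.ne'
  have hεtop : (ε : ENNReal) ≠ ⊤ := ENNReal.coe_ne_top
  have hfinal : ℙ B ≤ ENNReal.ofReal (exp (N * (t ^ 2 / 8))) / (ε : ENNReal) := by
    rw [ENNReal.le_div_iff_mul_le (Or.inl hε0) (Or.inl hεtop), mul_comm]
    exact hstep
  refine le_trans (measure_mono hincl) (le_trans hfinal ?_)
  have hεE : (ε : ENNReal) = ENNReal.ofReal (exp (t * a)) := by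
    rw [hεdef]
    simp [ENNReal.ofReal, Real.toNNReal_of_nonneg (exp_pos (t*a)).le]
    rfl
  rw [hεE, ← ENNReal.ofReal_div_of_pos (exp_pos _), ← Real.exp_sub]
  apply ENNReal.ofReal_le_ofReal
  apply exp_le_exp.2
  ring_nf
  exact le_refl _

lemma ahi_sum_sq (n : ℕ) :
    ∑ k ∈ Finset.range n, 1 / ((k + 1 : ℝ)) ^ 2 ≤ 2 - 2 / ((n : ℝ) + 1) := by
  induction n with
  | zero => simp
  | succ n ih =>
    rw [Finset.sum_range_succ]
    have h1 : (0 : ℝ) < (n : ℝ) + 1 := by positivity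
    have h2 : (0 : ℝ) < (n : ℝ) + 2 := by positivity
    have key : 1 / ((n : ℝ) + 1) ^ 2 ≤ 2 / ((n : ℝ) + 1) - 2 / ((n : ℝ) + 2) := by
      rw [div_sub_div _ _ h1.ne' h2.ne', div_le_div_iff₀ (by positivity) (by positivity)]
      nlinarith [h1, h2]
    push_cast
    rw [show ((n:ℝ) + 1 + 1) = (n:ℝ) + 2 from by ring]
    linarith

theorem adaptive_hoeffding_inequality
    {Ω : Type*} [MeasureSpace Ω] [IsProbabilityMeasure (ℙ : Measure Ω)]
    (X : ℕ → Ω → ℝ)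
    (hmeas : ∀ i, Measurable (X i))
    (hindep : iIndepFun X ℙ)
    (hbound : ∀ i, ∀ᵐ ω, X i ω ∈ Set.Icc (0 : ℝ) 1)
    (δ : ℝ) (hδ : δ ∈ Set.Ioo (0 : ℝ) 1) :
    ℙ {ω | ∃ n : ℕ, 1 ≤ n ∧
            Real.sqrt ((2 * log (logb 2 n + 1) + log (4 / δ)) / n)
              ≤ (∑ i ∈ Finset.range n, (X i ω - ∫ ω', X i ω' ∂ℙ)) / n}
      ≤ ENNReal.ofReal (δ / 2) := by
  obtain ⟨hδ0, hδ1⟩ := hδ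
  set D : ℝ := log (4 / δ) with hDdef
  have hD : 0 < D := Real.log_pos (by rw [lt_div_iff₀ hδ0]; linarith)
  set c : ℕ → ℝ := fun k => 2 * log (k + 1) + D with hcdef
  have hc : ∀ k, 0 < c k := by
    intro k
    have : (0 : ℝ) ≤ log (k + 1) := Real.log_nonneg (by push_cast; linarith [Nat.cast_nonneg (α := ℝ) k])
    simp only [hcdef]
    linarith
  set a : ℕ → ℝ := fun k => Real.sqrt (2 ^ k * c k) with hadef
  have ha : ∀ k, 0 < a k := fun k => Real.sqrt_pos.2 (by have := hc k; positivity)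
  set N : ℕ → ℕ := fun k => 2 ^ (k + 1) - 1 with hNdef
  have hN1 : ∀ k, 1 ≤ N k := by
    intro k
    have h : 2 ^ 1 ≤ 2 ^ (k + 1) := Nat.pow_le_pow_right (by norm_num) (by omega)
    simp only [hNdef]
    omega
  set t : ℕ → ℝ := fun k => 4 * a k / N k with htdef
  have hNr : ∀ k, (0 : ℝ) < N k := fun k => by
    have := hN1 k; positivity
  have ht : ∀ k, 0 < t k := fun k => by
    have := ha k; have := hNr k; positivity
  -- the union bound decomposition
  set A : ℕ → Set Ω := fun k => {ω | ∃ m : ℕ, 1 ≤ m ∧ m ≤ N k ∧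
      a k ≤ ∑ i ∈ Finset.range m, (X i ω - ∫ ω', X i ω' ∂ℙ)} with hAdef
  have hsubset : {ω | ∃ n : ℕ, 1 ≤ n ∧
      Real.sqrt ((2 * log (logb 2 n + 1) + log (4 / δ)) / n)
        ≤ (∑ i ∈ Finset.range n, (X i ω - ∫ ω', X i ω' ∂ℙ)) / n} ⊆ ⋃ k, A k := by
    rintro ω ⟨n, hn1, hn⟩
    set k := Nat.log 2 n with hkdef
    have hlow : 2 ^ k ≤ n := Nat.pow_log_le_self 2 (by omega)
    have hhigh : n < 2 ^ (k + 1) := Nat.lt_pow_succ_log_self (by norm_num) n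
    refine Set.mem_iUnion.2 ⟨k, n, hn1, by simp only [hNdef]; omega, ?_⟩
    have hnpos : (0 : ℝ) < n := by exact_mod_cast Nat.pos_of_ne_zero (by omega)
    set S : ℝ := ∑ i ∈ Finset.range n, (X i ω - ∫ ω', X i ω' ∂ℙ) with hSdef
    have hnS : (n : ℝ) * Real.sqrt ((2 * log (logb 2 n + 1) + D) / n) ≤ S := by
      have := mul_le_mul_of_nonneg_left hn hnpos.le
      rwa [mul_div_cancel₀ _ hnpos.ne'] at this
    have hcc : 0 ≤ 2 * log (logb 2 n + 1) + D := by
      have h1 : (1 : ℝ) ≤ (n : ℝ) := by exact_mod_cast hn1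
      have : (0 : ℝ) ≤ logb 2 n := Real.logb_nonneg (by norm_num) h1
      have : (0 : ℝ) ≤ log (logb 2 n + 1) := Real.log_nonneg (by linarith)
      linarith
    have hsqrt_eq : (n : ℝ) * Real.sqrt ((2 * log (logb 2 n + 1) + D) / n)
        = Real.sqrt (n * (2 * log (logb 2 n + 1) + D)) := by
      rw [show (n : ℝ) * Real.sqrt ((2 * log (logb 2 n + 1) + D) / n)
          = Real.sqrt ((n : ℝ) ^ 2) * Real.sqrt ((2 * log (logb 2 n + 1) + D) / n) by
            rw [Real.sqrt_sq hnpos.le],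
        ← Real.sqrt_mul (by positivity)]
      congr 1
      field_simp
    have hklogb : (k : ℝ) ≤ logb 2 n := by
      have h2k : ((2 : ℝ) ^ k) ≤ (n : ℝ) := by exact_mod_cast hlow
      have := Real.logb_le_logb_of_le (by norm_num : (1:ℝ) < 2) (by positivity) h2k
      rwa [Real.logb_pow, Real.logb_self_eq_one (by norm_num), mul_one] at this
    have hmono : 2 ^ k * c k ≤ (n : ℝ) * (2 * log (logb 2 n + 1) + D) := by
      refine mul_le_mul ?_ ?_ (hc k).le hnpos.le
      · exact_mod_cast hlow
      · have h1 : (0 : ℝ) < (k : ℝ) + 1 := by positivity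
        have h2 : (k : ℝ) + 1 ≤ logb 2 n + 1 := by linarith
        have := Real.log_le_log h1 h2
        simp only [hcdef]
        linarith
    calc a k = Real.sqrt (2 ^ k * c k) := rfl
      _ ≤ Real.sqrt ((n : ℝ) * (2 * log (logb 2 n + 1) + D)) := Real.sqrt_le_sqrt hmono
      _ = (n : ℝ) * Real.sqrt ((2 * log (logb 2 n + 1) + D) / n) := hsqrt_eq.symm
      _ ≤ S := hnS
  refine le_trans (measure_mono hsubset) (le_trans (measure_iUnion_le A) ?_)
  -- bound each ℙ (A k)
  have hbound_k : ∀ k, ℙ (A k) ≤ ENNReal.ofReal (1 / ((k + 1 : ℝ)) ^ 2 * (δ / 4)) := by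
    intro k
    refine le_trans (ahi_max X hmeas hindep hbound (N k) (hN1 k) (a k) (t k) (ht k)) ?_
    apply ENNReal.ofReal_le_ofReal
    have hak2 : a k ^ 2 = 2 ^ k * c k := Real.sq_sqrt (by have := hc k; positivity)
    have hNne : ((N k : ℝ)) ≠ 0 := (hNr k).ne'
    have hexp_arg : -(t k * a k) + (N k : ℝ) * (t k ^ 2 / 8) = -(2 * a k ^ 2 / N k) := by
      simp only [htdef]
      field_simp
      ring
    rw [hexp_arg]
    have hNle : (N k : ℝ) ≤ 2 * 2 ^ k := by
      have : (N k : ℕ) ≤ 2 ^ (k + 1) := Nat.sub_le _ _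
      calc (N k : ℝ) ≤ ((2:ℕ) ^ (k + 1) : ℕ) := by exact_mod_cast this
        _ = 2 * 2 ^ k := by push_cast; ring
    have harg_le : -(2 * a k ^ 2 / N k) ≤ -(c k) := by
      rw [neg_le_neg_iff, hak2]
      rw [le_div_iff₀ (hNr k)]
      nlinarith [hc k, hNle, hNr k]
    refine le_trans (exp_le_exp.2 harg_le) ?_
    have : exp (-(c k)) = 1 / ((k + 1 : ℝ)) ^ 2 * (δ / 4) := by
      simp only [hcdef]
      rw [neg_add, Real.exp_add]
      congr 1
      · rw [show -(2 * log ((k:ℝ) + 1)) = -(log (((k:ℝ) + 1) ^ 2)) by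
          rw [Real.log_pow]; push_cast; ring]
        rw [Real.exp_neg, Real.exp_log (by positivity)]
        rw [one_div]
      · rw [Real.exp_neg, Real.exp_log (by positivity : (0:ℝ) < 4 / δ)]
        rw [inv_div]
    rw [this]
  refine le_trans (ENNReal.tsum_le_tsum hbound_k) ?_
  refine ENNReal.tsum_le_of_sum_range_le (fun n => ?_)
  rw [← ENNReal.ofReal_sum_of_nonneg (fun i _ => by positivity)]
  apply ENNReal.ofReal_le_ofReal
  have h1 : ∑ k ∈ Finset.range n, 1 / ((k + 1 : ℝ)) ^ 2 * (δ / 4)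
      = (∑ k ∈ Finset.range n, 1 / ((k + 1 : ℝ)) ^ 2) * (δ / 4) := by
    rw [Finset.sum_mul]
  rw [h1]
  have h2 := ahi_sum_sq n
  have h4 : (0:ℝ) ≤ 2 / ((n:ℝ) + 1) := by positivity
  have hsum2 : ∑ k ∈ Finset.range n, 1 / ((k + 1 : ℝ)) ^ 2 ≤ 2 := by linarith
  calc (∑ k ∈ Finset.range n, 1 / ((k + 1 : ℝ)) ^ 2) * (δ / 4) ≤ 2 * (δ / 4) :=
        mul_le_mul_of_nonneg_right hsum2 (by positivity)
    _ = δ / 2 := by ring
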